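/- Suppose ψ : ℝ → ℝ is differentiable at x0 with Dψ(x0) = ω > 0, and fix R1 > 1. Then there exist a constant R2 > 0 depending only on ω and R1, and for each ε ∈ (0,1) a δ > 0, such that for all z1 < z2 < z3 < z4 in (x0-δ, x0+δ) satisfying conditions (C_{R1,ε}), the cross-ratio distortion satisfies |Dist(z1,z2,z3,z4;ψ) - 1| ≤ R2√ε. -/

import Mathlib

noncomputable def Cr (a1 a2 a3 a4 : ℝ) : ℝ :=
  ((a2 - a1) * (a4 - a3)) / ((a3 - a1) * (a4 - a2))

noncomputable def crDist (a1 a2 a3 a4 : ℝ) (f : ℝ → ℝ) : ℝ :=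
  Cr (f a1) (f a2) (f a3) (f a4) / Cr a1 a2 a3 a4

lemma aux_ratio (t a b c d : ℝ) (ht0 : 0 ≤ t) (ht : t ≤ 1/4)
    (ha : |a| ≤ t) (hb : |b| ≤ t) (hc : |c| ≤ t) (hd : |d| ≤ t) :
    |(1+a)*(1+b)/((1+c)*(1+d)) - 1| ≤ 8*t := by
  obtain ⟨ha1, ha2⟩ := abs_le.mp ha
  obtain ⟨hb1, hb2⟩ := abs_le.mp hb
  obtain ⟨hc1, hc2⟩ := abs_le.mp hc
  obtain ⟨hd1, hd2⟩ := abs_le.mp hd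
  have hab : |a*b| ≤ t*t := by
    rw [abs_mul]; exact mul_le_mul ha hb (abs_nonneg b) ht0
  have hcd : |c*d| ≤ t*t := by
    rw [abs_mul]; exact mul_le_mul hc hd (abs_nonneg d) ht0
  obtain ⟨hab1, hab2⟩ := abs_le.mp hab
  obtain ⟨hcd1, hcd2⟩ := abs_le.mp hcd
  have htt : t*t ≤ (1/4)*t := by nlinarith
  have hD : (9:ℝ)/16 ≤ (1+c)*(1+d) := by nlinarith
  have hD0 : (0:ℝ) < (1+c)*(1+d) := by linarith
  have key : (1+a)*(1+b)/((1+c)*(1+d)) - 1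
      = ((1+a)*(1+b) - (1+c)*(1+d))/((1+c)*(1+d)) := by
    rw [sub_div, div_self hD0.ne']
  rw [key, abs_div, abs_of_pos hD0, div_le_iff₀ hD0]
  have hnum : |(1+a)*(1+b) - (1+c)*(1+d)| ≤ 9/2*t := by
    have hexp : (1+a)*(1+b) - (1+c)*(1+d) = a + b + a*b - c - d - c*d := by ring
    rw [hexp, abs_le]
    constructor <;> linarith
  have h8 : 9/2*t ≤ 8*t*((1+c)*(1+d)) := by nlinarith
  linarith

lemma rel_err_bound (ω ε R1 s g E : ℝ) (hω : 0 < ω) (hε : 0 < ε)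
    (hR : 0 < R1) (hs : 0 < s)
    (hg : R1⁻¹*s*Real.sqrt ε ≤ g)
    (hE : |E| ≤ 2*(ω*ε/(8*R1^2))*(R1*s)) :
    |E/(ω*g)| ≤ Real.sqrt ε/4 := by
  have hsq0 : 0 < Real.sqrt ε := Real.sqrt_pos.mpr hε
  have hsqsq : Real.sqrt ε * Real.sqrt ε = ε := Real.mul_self_sqrt hε.le
  have hg0 : 0 < g := lt_of_lt_of_le (by positivity) hg
  rw [abs_div, abs_of_pos (by positivity : 0 < ω*g),
    div_le_iff₀ (by positivity : 0 < ω*g)]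
  have h1 : 2*(ω*ε/(8*R1^2))*(R1*s) = ω*ε*s/(4*R1) := by
    field_simp; ring
  have h2 : Real.sqrt ε/4*(ω*(R1⁻¹*s*Real.sqrt ε)) = ω*ε*s/(4*R1) := by
    linear_combination (ω * s * R1⁻¹ / 4) * hsqsq
  have h3 : Real.sqrt ε/4*(ω*(R1⁻¹*s*Real.sqrt ε)) ≤ Real.sqrt ε/4*(ω*g) := by
    apply mul_le_mul_of_nonneg_left _ (by positivity)
    exact mul_le_mul_of_nonneg_left hg hω.le
  linarith

lemma lin_expand (ω g Ψ : ℝ) (h : ω*g ≠ 0) :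
    Ψ = ω*g*(1 + (Ψ - ω*g)/(ω*g)) := by
  rw [mul_add, mul_one, mul_div_cancel₀ _ h]; ring

lemma cr_quot (ω g21 g43 g31 g42 a b c d : ℝ)
    (hω : ω ≠ 0) (h21 : g21 ≠ 0) (h43 : g43 ≠ 0) (h31 : g31 ≠ 0)
    (h42 : g42 ≠ 0) (hc : (1+c) ≠ 0) (hd : (1+d) ≠ 0) :
    ((ω*g21*(1+a)) * (ω*g43*(1+b))) / ((ω*g31*(1+c)) * (ω*g42*(1+d)))
      / ((g21*g43)/(g31*g42))
    = (1+a)*(1+b)/((1+c)*(1+d)) := by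
  field_simp

lemma crDist_eq (ψ : ℝ → ℝ) (ω z1 z2 z3 z4 : ℝ) (hω : 0 < ω)
    (h12 : z1 < z2) (h23 : z2 < z3) (h34 : z3 < z4)
    (hc : (1 : ℝ) + ((ψ z3 - ψ z1) - ω*(z3 - z1))/(ω*(z3 - z1)) ≠ 0)
    (hd : (1 : ℝ) + ((ψ z4 - ψ z2) - ω*(z4 - z2))/(ω*(z4 - z2)) ≠ 0) :
    crDist z1 z2 z3 z4 ψ
      = (1 + ((ψ z2 - ψ z1) - ω*(z2 - z1))/(ω*(z2 - z1)))
        * (1 + ((ψ z4 - ψ z3) - ω*(z4 - z3))/(ω*(z4 - z3)))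
        / ((1 + ((ψ z3 - ψ z1) - ω*(z3 - z1))/(ω*(z3 - z1)))
        * (1 + ((ψ z4 - ψ z2) - ω*(z4 - z2))/(ω*(z4 - z2)))) := by
  have hn21 : ω*(z2 - z1) ≠ 0 := ne_of_gt (mul_pos hω (by linarith))
  have hn43 : ω*(z4 - z3) ≠ 0 := ne_of_gt (mul_pos hω (by linarith))
  have hn31 : ω*(z3 - z1) ≠ 0 := ne_of_gt (mul_pos hω (by linarith))
  have hn42 : ω*(z4 - z2) ≠ 0 := ne_of_gt (mul_pos hω (by linarith))
  have e21 := lin_expand ω (z2 - z1) (ψ z2 - ψ z1) hn21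
  have e43 := lin_expand ω (z4 - z3) (ψ z4 - ψ z3) hn43
  have e31 := lin_expand ω (z3 - z1) (ψ z3 - ψ z1) hn31
  have e42 := lin_expand ω (z4 - z2) (ψ z4 - ψ z2) hn42
  rw [crDist, Cr, Cr]
  conv_lhs => rw [e21, e43, e31, e42]
  exact cr_quot ω (z2 - z1) (z4 - z3) (z3 - z1) (z4 - z2)
    (((ψ z2 - ψ z1) - ω*(z2 - z1))/(ω*(z2 - z1)))
    (((ψ z4 - ψ z3) - ω*(z4 - z3))/(ω*(z4 - z3)))
    (((ψ z3 - ψ z1) - ω*(z3 - z1))/(ω*(z3 - z1)))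
    (((ψ z4 - ψ z2) - ω*(z4 - z2))/(ω*(z4 - z2)))
    (ne_of_gt hω) (ne_of_gt (by linarith)) (ne_of_gt (by linarith))
    (ne_of_gt (by linarith)) (ne_of_gt (by linarith)) hc hd

theorem cross_ratio_distortion_estimate_at_differentiability_point
    (ψ : ℝ → ℝ) (x0 ω : ℝ) (hω : 0 < ω)
    (hdiff : HasDerivAt ψ ω x0)
    (R1 : ℝ) (hR1 : 1 < R1) :
    ∃ R2 > 0, ∀ ε ∈ Set.Ioo (0 : ℝ) 1, ∃ δ > 0,
      ∀ z1 z2 z3 z4 : ℝ,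
        z1 ∈ Set.Ioo (x0 - δ) (x0 + δ) → z2 ∈ Set.Ioo (x0 - δ) (x0 + δ) →
        z3 ∈ Set.Ioo (x0 - δ) (x0 + δ) → z4 ∈ Set.Ioo (x0 - δ) (x0 + δ) →
        z1 < z2 → z2 < z3 → z3 < z4 →
        -- condition (a)
        R1⁻¹ * (z3 - z2) * Real.sqrt ε ≤ z2 - z1 →
        z2 - z1 ≤ R1 * (z3 - z2) * ε ^ ((1 : ℝ)/4) →
        -- condition (b)
        R1⁻¹ * (z3 - z2) ≤ z4 - z3 → z4 - z3 ≤ R1 * (z3 - z2) →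
        -- condition (c)
        (∀ z ∈ ({z1, z2, z3, z4} : Set ℝ), |x0 - z| ≤ R1 * (z3 - z2)) →
        |crDist z1 z2 z3 z4 ψ - 1| ≤ R2 * Real.sqrt ε := by
  refine ⟨2, by norm_num, ?_⟩
  rintro ε ⟨hε0, hε1⟩
  have hsq0 : 0 < Real.sqrt ε := Real.sqrt_pos.mpr hε0
  have hsq1 : Real.sqrt ε ≤ 1 := by
    rw [show (1:ℝ) = Real.sqrt 1 by simp]
    exact Real.sqrt_le_sqrt hε1.le
  have hR0 : (0:ℝ) < R1 := lt_trans one_pos hR1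
  have hκ0 : 0 < ω * ε / (8 * R1^2) := by positivity
  have h1 := hasDerivAt_iff_isLittleO.mp hdiff
  have h2 := Asymptotics.isLittleO_iff.mp h1 hκ0
  rw [Metric.eventually_nhds_iff] at h2
  obtain ⟨δ, hδ0, hδ⟩ := h2
  refine ⟨δ, hδ0, ?_⟩
  intro z1 z2 z3 z4 hz1 hz2 hz3 hz4 h12 h23 h34 hA1 hA2 hB1 hB2 hC
  have hs : 0 < z3 - z2 := by linarith
  have hu : ∀ z ∈ ({z1,z2,z3,z4} : Set ℝ),
      |ψ z - ψ x0 - ω*(z - x0)| ≤ ω * ε / (8 * R1^2) * (R1 * (z3 - z2)) := by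
    intro z hz
    have hzc := hC z hz
    have hzI : z ∈ Set.Ioo (x0 - δ) (x0 + δ) := by
      simp only [Set.mem_insert_iff, Set.mem_singleton_iff] at hz
      rcases hz with rfl|rfl|rfl|rfl <;> assumption
    have hdist : dist z x0 < δ := by
      rw [Real.dist_eq, abs_lt]
      exact ⟨by linarith [hzI.1], by linarith [hzI.2]⟩
    have hb := hδ hdist
    rw [Real.norm_eq_abs, Real.norm_eq_abs] at hb
    have heq : ψ z - ψ x0 - (z - x0) • ω = ψ z - ψ x0 - ω*(z - x0) := by
      rw [smul_eq_mul]; ring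
    rw [heq] at hb
    calc |ψ z - ψ x0 - ω*(z - x0)| ≤ ω * ε / (8 * R1^2) * |z - x0| := hb
      _ ≤ ω * ε / (8 * R1^2) * (R1 * (z3 - z2)) := by
          apply mul_le_mul_of_nonneg_left _ hκ0.le
          rw [abs_sub_comm]; exact hzc
  have hdb : ∀ zi zj, zi ∈ ({z1,z2,z3,z4} : Set ℝ) →
      zj ∈ ({z1,z2,z3,z4} : Set ℝ) →
      |(ψ zj - ψ zi) - ω*(zj - zi)| ≤ 2*(ω * ε / (8 * R1^2))*(R1*(z3 - z2)) := by
    intro zi zj hi hj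
    have h1' := hu zi hi
    have h2' := hu zj hj
    have hexp : (ψ zj - ψ zi) - ω*(zj - zi)
        = (ψ zj - ψ x0 - ω*(zj - x0)) - (ψ zi - ψ x0 - ω*(zi - x0)) := by ring
    rw [hexp]
    calc |(ψ zj - ψ x0 - ω*(zj - x0)) - (ψ zi - ψ x0 - ω*(zi - x0))|
        ≤ |ψ zj - ψ x0 - ω*(zj - x0)| + |ψ zi - ψ x0 - ω*(zi - x0)| :=
          abs_sub _ _
      _ ≤ 2*(ω * ε / (8 * R1^2))*(R1*(z3 - z2)) := by linarith
  have m1 : z1 ∈ ({z1,z2,z3,z4} : Set ℝ) := by simp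
  have m2 : z2 ∈ ({z1,z2,z3,z4} : Set ℝ) := by simp
  have m3 : z3 ∈ ({z1,z2,z3,z4} : Set ℝ) := by simp
  have m4 : z4 ∈ ({z1,z2,z3,z4} : Set ℝ) := by simp
  have hR1inv : R1⁻¹ ≤ 1 := by
    rw [inv_le_one_iff₀]; right; exact hR1.le
  have hR1inv0 : 0 < R1⁻¹ := by positivity
  have hg21 : R1⁻¹*(z3 - z2)*Real.sqrt ε ≤ z2 - z1 := hA1
  have hg43 : R1⁻¹*(z3 - z2)*Real.sqrt ε ≤ z4 - z3 := by nlinarith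
  have hg31 : R1⁻¹*(z3 - z2)*Real.sqrt ε ≤ z3 - z1 := by nlinarith
  have hg42 : R1⁻¹*(z3 - z2)*Real.sqrt ε ≤ z4 - z2 := by nlinarith
  have ea := rel_err_bound ω ε R1 (z3 - z2) (z2 - z1) _ hω hε0 hR0 hs hg21
    (hdb z1 z2 m1 m2)
  have eb := rel_err_bound ω ε R1 (z3 - z2) (z4 - z3) _ hω hε0 hR0 hs hg43
    (hdb z3 z4 m3 m4)
  have ec := rel_err_bound ω ε R1 (z3 - z2) (z3 - z1) _ hω hε0 hR0 hs hg31
    (hdb z1 z3 m1 m3)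
  have ed := rel_err_bound ω ε R1 (z3 - z2) (z4 - z2) _ hω hε0 hR0 hs hg42
    (hdb z2 z4 m2 m4)
  have hsq4 : Real.sqrt ε/4 ≤ 1/4 := by linarith
  have h1c : (0:ℝ) < 1 + ((ψ z3 - ψ z1) - ω*(z3 - z1))/(ω*(z3 - z1)) := by
    have := (abs_le.mp ec).1; linarith
  have h1d : (0:ℝ) < 1 + ((ψ z4 - ψ z2) - ω*(z4 - z2))/(ω*(z4 - z2)) := by
    have := (abs_le.mp ed).1; linarith
  rw [crDist_eq ψ ω z1 z2 z3 z4 hω h12 h23 h34 (ne_of_gt h1c) (ne_of_gt h1d)]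
  have := aux_ratio (Real.sqrt ε/4) _ _ _ _ (by positivity) hsq4 ea eb ec ed
  linarith
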